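/- (A priori estimate of Theorem 3.3.) Under the Hilbert propagator setup and the Hilbert solution setup, assume additionally: there is ω ≥ 0 with β(t) ≤ α(t)·ω^p·‖U(t)‖^p for all t ≥ 0; ‖u₀‖ + ω > 0; J := ∫₀^∞ α(ξ)·‖V(ξ)‖·‖U(ξ)‖^p dξ < ∞; and (‖u₀‖ + ω)^{1−p} > (p−1)·J. Set M₃ := 1/((‖u₀‖ + ω)^{1−p} − (p−1)·J). Then for all t ∈ [0,T): ‖u(t)‖ ≤ ‖U(t)‖·(M₃^{1/(p−1)} − ω). In particular, if T = ∞ and ‖U(t)‖ → 0 as t → ∞, then u(t) → 0 as t → ∞. -/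

import Mathlib

open MeasureTheory Filter
open scoped ENNReal


lemma my_add_rpow {a b p : ℝ} (ha : 0 ≤ a) (hb : 0 ≤ b) (hp : 1 ≤ p) :
    a ^ p + b ^ p ≤ (a + b) ^ p := by
  lift a to NNReal using ha
  lift b to NNReal using hb
  have := NNReal.add_rpow_le_rpow_add a b hp
  exact_mod_cast this

lemma gronwall_key {p ω ε t : ℝ} (hp : 1 < p) (hω : 0 ≤ ω) (hε : 0 < ε) (ht : 0 ≤ t)
    (φ g : ℝ → ℝ) (hφ0 : ∀ s, 0 ≤ φ s)
    (hφd : ∀ s ∈ Set.Icc 0 t, DifferentiableAt ℝ φ s)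
    (hg : Continuous g) (hg0 : ∀ s, 0 ≤ g s)
    (hineq : ∀ s ∈ Set.Icc 0 t, deriv φ s ≤ g s * (φ s + ω) ^ p) :
    (φ 0 + ω + ε) ^ (1 - p) - (p - 1) * ∫ s in (0:ℝ)..t, g s ≤ (φ t + ω + ε) ^ (1 - p) := by
  have hψpos : ∀ s, 0 < φ s + ω + ε := fun s => by have := hφ0 s; linarith
  set χ : ℝ → ℝ := fun s => (φ s + ω + ε) ^ (1 - p) + (p - 1) * ∫ r in (0:ℝ)..s, g r with hχ
  have hd : ∀ s ∈ Set.Icc 0 t, HasDerivAt χ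
      ((1 - p) * (φ s + ω + ε) ^ (1 - p - 1) * deriv φ s + (p - 1) * g s) s := by
    intro s hs
    have h1 : HasDerivAt (fun r => φ r + ω + ε) (deriv φ s) s := by
      simpa using (((hφd s hs).hasDerivAt.add_const ω).add_const ε)
    have h2 := h1.rpow_const (p := 1 - p) (Or.inl (hψpos s).ne')
    have h3 : HasDerivAt (fun r => ∫ x in (0:ℝ)..r, g x) (g s) s :=
      intervalIntegral.integral_hasDerivAt_right (hg.intervalIntegrable _ _)
        (hg.stronglyMeasurableAtFilter _ _) hg.continuousAt
    exact (h2.add (h3.const_mul (p - 1))).congr_deriv (by ring)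
  have mono : MonotoneOn χ (Set.Icc 0 t) := by
    apply monotoneOn_of_deriv_nonneg (convex_Icc 0 t)
    · exact fun s hs => (hd s hs).continuousAt.continuousWithinAt
    · intro s hs
      rw [interior_Icc] at hs
      exact (hd s (Set.mem_Icc_of_Ioo hs)).differentiableAt.differentiableWithinAt
    · intro s hs
      rw [interior_Icc] at hs
      have hs' := Set.mem_Icc_of_Ioo hs
      rw [(hd s hs').deriv]
      set ψ := φ s + ω + ε with hψdef
      have hψ : 0 < ψ := hψpos s
      have hA : ψ ^ (1 - p - 1) * ψ ^ p = 1 := by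
        rw [← Real.rpow_add hψ]; norm_num
      have h1 : deriv φ s ≤ g s * ψ ^ p := by
        refine (hineq s hs').trans (mul_le_mul_of_nonneg_left ?_ (hg0 s))
        exact Real.rpow_le_rpow (by have := hφ0 s; linarith) (by linarith) (by linarith)
      have key : (1 - p) * (g s * ψ ^ p) ≤ (1 - p) * deriv φ s :=
        mul_le_mul_of_nonpos_left h1 (by linarith)
      have h3 : (1 - p) * g s ≤ ψ ^ (1 - p - 1) * ((1 - p) * deriv φ s) := by
        have h4 := mul_le_mul_of_nonneg_left key (Real.rpow_nonneg hψ.le (1 - p - 1))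
        calc (1 - p) * g s = ψ ^ (1 - p - 1) * ((1 - p) * (g s * ψ ^ p)) := by
              linear_combination ((p - 1) * g s) * hA
          _ ≤ _ := h4
      have h4 : (1 - p) * ψ ^ (1 - p - 1) * deriv φ s
          = ψ ^ (1 - p - 1) * ((1 - p) * deriv φ s) := by ring
      rw [h4]; linarith
  have := mono (Set.left_mem_Icc.2 ht) (Set.right_mem_Icc.2 ht) ht
  simp only [hχ, intervalIntegral.integral_same, mul_zero, add_zero] at this
  linarith

lemma gronwall_bound {p ω t J : ℝ} (hp : 1 < p) (hω : 0 ≤ ω) (ht : 0 ≤ t)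
    (φ g : ℝ → ℝ) (hφ0 : ∀ s, 0 ≤ φ s)
    (hφd : ∀ s ∈ Set.Icc 0 t, DifferentiableAt ℝ φ s)
    (hg : Continuous g) (hg0 : ∀ s, 0 ≤ g s)
    (hineq : ∀ s ∈ Set.Icc 0 t, deriv φ s ≤ g s * (φ s + ω) ^ p)
    (hc : 0 < φ 0 + ω)
    (hJle : ∫ s in (0:ℝ)..t, g s ≤ J)
    (hsmall : (p - 1) * J < (φ 0 + ω) ^ (1 - p)) :
    φ t + ω ≤ (1 / ((φ 0 + ω) ^ (1 - p) - (p - 1) * J)) ^ (1 / (p - 1)) := by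
  set c := φ 0 + ω with hcdef
  set D : ℝ → ℝ := fun ε => (c + ε) ^ (1 - p) - (p - 1) * J with hD
  have hDc : ContinuousAt D 0 := by
    apply ContinuousAt.sub _ continuousAt_const
    exact (Real.continuousAt_rpow_const _ _ (Or.inl (by simpa using hc.ne'))).comp
      (continuous_const.add continuous_id).continuousAt
  have hD0 : 0 < D 0 := by simp [hD]; linarith
  have hev : ∀ᶠ ε in nhdsWithin (0:ℝ) (Set.Ioi 0), φ t + ω + ε ≤ D ε ^ (1 / (1 - p)) := by
    have hposev : ∀ᶠ ε in nhdsWithin (0:ℝ) (Set.Ioi 0), 0 < D ε :=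
      (hDc.continuousWithinAt.eventually_const_lt hD0)
    filter_upwards [hposev, self_mem_nhdsWithin] with ε hDε (hε : 0 < ε)
    have hkey := gronwall_key hp hω hε ht φ g hφ0 hφd hg hg0 hineq
    have h1 : D ε ≤ (φ t + ω + ε) ^ (1 - p) := by
      have : (p - 1) * (∫ s in (0:ℝ)..t, g s) ≤ (p - 1) * J :=
        mul_le_mul_of_nonneg_left hJle (by linarith)
      simp only [hD]; linarith
    have hx : 0 < φ t + ω + ε := by have := hφ0 t; linarith
    have h2 := Real.rpow_le_rpow_of_nonpos hDε h1
      (z := 1 / (1 - p)) (by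
        rw [one_div]
        exact inv_nonpos.2 (by linarith))
    calc φ t + ω + ε = ((φ t + ω + ε) ^ (1 - p)) ^ (1 / (1 - p)) := by
          rw [one_div, Real.rpow_rpow_inv hx.le (by linarith)]
      _ ≤ D ε ^ (1 / (1 - p)) := h2
  have hlim1 : Tendsto (fun ε => φ t + ω + ε) (nhdsWithin (0:ℝ) (Set.Ioi 0)) (nhds (φ t + ω)) := by
    have : Tendsto (fun ε : ℝ => φ t + ω + ε) (nhds 0) (nhds (φ t + ω + 0)) :=
      (continuous_const.add continuous_id).tendsto 0
    simpa using this.mono_left nhdsWithin_le_nhds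
  have hlim2 : Tendsto (fun ε => D ε ^ (1 / (1 - p))) (nhdsWithin (0:ℝ) (Set.Ioi 0))
      (nhds (D 0 ^ (1 / (1 - p)))) := by
    have : ContinuousAt (fun x : ℝ => x ^ (1 / (1 - p))) (D 0) :=
      Real.continuousAt_rpow_const _ _ (Or.inl hD0.ne')
    exact (this.comp hDc).tendsto.mono_left nhdsWithin_le_nhds
  have hle : φ t + ω ≤ D 0 ^ (1 / (1 - p)) := le_of_tendsto_of_tendsto hlim1 hlim2 hev
  have hexp : 1 / (1 - p) = -(1 / (p - 1)) := by
    have h1 : (1:ℝ) - p ≠ 0 := by linarith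
    have h2 : p - 1 ≠ 0 := by linarith
    field_simp
    ring
  have hrw : D 0 ^ (1 / (1 - p)) = (1 / D 0) ^ (1 / (p - 1)) := by
    rw [one_div (D 0), Real.inv_rpow hD0.le, ← Real.rpow_neg hD0.le, hexp]
  rw [hrw] at hle
  simpa [hD] using hle

theorem stmt13
    {H : Type*} [NormedAddCommGroup H] [InnerProductSpace ℂ H] [CompleteSpace H]
    (B U V : ℝ → H →L[ℂ] H)
    (hB : Continuous B)
    (hU0 : U 0 = 1) (hV0 : V 0 = 1)
    (hVU : ∀ t, 0 ≤ t → (V t).comp (U t) = 1)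
    (hUV : ∀ t, 0 ≤ t → (U t).comp (V t) = 1)
    (hUd : ∀ t, 0 ≤ t → HasDerivAt U ((B t).comp (U t)) t)
    (hVd : ∀ t, 0 ≤ t → HasDerivAt V (-((V t).comp (B t))) t)
    (p : ℝ) (hp : 1 < p)
    (α β : ℝ → ℝ) (hαc : Continuous α) (hβc : Continuous β)
    (hα0 : ∀ t, 0 ≤ α t) (hβ0 : ∀ t, 0 ≤ β t)
    (T : ℝ≥0∞) (hT : 0 < T)
    (u w G f : ℝ → H) (u₀ : H) (hu0 : u 0 = u₀)
    (hwc : ContinuousOn w {t : ℝ | 0 ≤ t ∧ ENNReal.ofReal t < T})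
    (hGc : ContinuousOn G {t : ℝ | 0 ≤ t ∧ ENNReal.ofReal t < T})
    (hfc : ContinuousOn f {t : ℝ | 0 ≤ t ∧ ENNReal.ofReal t < T})
    (hud : ∀ t, 0 ≤ t → ENNReal.ofReal t < T →
      HasDerivAt u (B t (u t) + w t + G t + f t) t)
    (hw : ∀ t, 0 ≤ t → ENNReal.ofReal t < T →
      (inner ℂ (V t (w t)) (V t (u t)) : ℂ).re ≤ 0)
    (hGb : ∀ t, 0 ≤ t → ENNReal.ofReal t < T → ‖G t‖ ≤ α t * ‖u t‖ ^ p)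
    (hfb : ∀ t, 0 ≤ t → ENNReal.ofReal t < T → ‖f t‖ ≤ β t)
    (hVud : ∀ t, 0 ≤ t → ENNReal.ofReal t < T →
      DifferentiableAt ℝ (fun s => ‖V s (u s)‖) t)
    (ω : ℝ) (hω : 0 ≤ ω)
    (hβω : ∀ t, 0 ≤ t → β t ≤ α t * ω ^ p * ‖U t‖ ^ p)
    (hpos : 0 < ‖u₀‖ + ω)
    (hJint : IntegrableOn (fun ξ => α ξ * ‖V ξ‖ * ‖U ξ‖ ^ p) (Set.Ioi (0:ℝ)))
    (J : ℝ) (hJ : J = ∫ ξ in Set.Ioi (0:ℝ), α ξ * ‖V ξ‖ * ‖U ξ‖ ^ p)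
    (hsmall : (p - 1) * J < (‖u₀‖ + ω) ^ (1 - p)) :
    (∀ t, 0 ≤ t → ENNReal.ofReal t < T →
      ‖u t‖ ≤ ‖U t‖ * ((1 / ((‖u₀‖ + ω) ^ (1 - p) - (p - 1) * J)) ^ (1 / (p - 1)) - ω)) ∧
    (T = ⊤ → Tendsto (fun t => ‖U t‖) atTop (nhds 0) → Tendsto u atTop (nhds 0)) := by
  letI : InnerProductSpace ℝ H := InnerProductSpace.complexToReal
  set K : ℝ := (1 / ((‖u₀‖ + ω) ^ (1 - p) - (p - 1) * J)) ^ (1 / (p - 1)) with hKdef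
  set φ : ℝ → ℝ := fun s => ‖V s (u s)‖ with hφdef
  set g : ℝ → ℝ := fun ξ => α ξ * ‖V (max ξ 0)‖ * ‖U (max ξ 0)‖ ^ p with hgdef
  have hmax : Continuous (fun ξ : ℝ => max ξ 0) := continuous_id.max continuous_const
  have hVmax : Continuous (fun ξ : ℝ => V (max ξ 0)) := by
    rw [continuous_iff_continuousAt]
    intro ξ
    exact ContinuousAt.comp (f := fun ξ : ℝ => max ξ 0) (x := ξ)
      ((hVd _ (le_max_right ξ 0)).continuousAt) hmax.continuousAt
  have hUmax : Continuous (fun ξ : ℝ => U (max ξ 0)) := by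
    rw [continuous_iff_continuousAt]
    intro ξ
    exact ContinuousAt.comp (f := fun ξ : ℝ => max ξ 0) (x := ξ)
      ((hUd _ (le_max_right ξ 0)).continuousAt) hmax.continuousAt
  have hrpowc : Continuous (fun x : ℝ => x ^ p) := by
    rw [continuous_iff_continuousAt]
    intro x
    exact Real.continuousAt_rpow_const _ _ (Or.inr (by linarith))
  have hgc : Continuous g :=
    (hαc.mul hVmax.norm).mul (hrpowc.comp hUmax.norm)
  have hg0 : ∀ ξ, 0 ≤ g ξ := fun ξ =>
    mul_nonneg (mul_nonneg (hα0 ξ) (norm_nonneg _)) (Real.rpow_nonneg (norm_nonneg _) _)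
  have hφ0 : ∀ s, 0 ≤ φ s := fun s => norm_nonneg _
  have hJ0 : 0 ≤ J := by
    rw [hJ]
    exact setIntegral_nonneg measurableSet_Ioi fun ξ _ =>
      mul_nonneg (mul_nonneg (hα0 ξ) (norm_nonneg _)) (Real.rpow_nonneg (norm_nonneg _) _)
  have hφ00 : φ 0 = ‖u₀‖ := by simp [hφdef, hV0, hu0]
  have huU : ∀ s, 0 ≤ s → ‖u s‖ ≤ ‖U s‖ * φ s := by
    intro s hs0
    have h1 : U s (V s (u s)) = u s := by
      have h2 := hUV s hs0
      calc U s (V s (u s)) = ((U s).comp (V s)) (u s) := rfl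
        _ = u s := by rw [h2]; simp
    calc ‖u s‖ = ‖U s (V s (u s))‖ := by rw [h1]
      _ ≤ ‖U s‖ * ‖V s (u s)‖ := (U s).le_opNorm _
  have hineq : ∀ s, 0 ≤ s → ENNReal.ofReal s < T → deriv φ s ≤ g s * (φ s + ω) ^ p := by
    intro s hs0 hsT
    have hgs : g s = α s * ‖V s‖ * ‖U s‖ ^ p := by
      simp only [hgdef, max_eq_left hs0]
    set v' : H := V s (w s) + V s (G s) + V s (f s) with hv'def
    have hv2 : HasDerivAt (fun r => V r (u r)) v' s := by
      have hvρ : HasDerivAt (fun r => (V r).restrictScalars ℝ)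
          ((-((V s).comp (B s))).restrictScalars ℝ) s :=
        ((ContinuousLinearMap.restrictScalarsIsometry ℂ H H ℝ
          ℝ).toContinuousLinearMap).hasFDerivAt.comp_hasDerivAt s (hVd s hs0)
      have hv := hvρ.clm_apply (hud s hs0 hsT)
      have hfun : (fun y => ((V y).restrictScalars ℝ) (u y)) = (fun r => V r (u r)) := rfl
      rw [hfun] at hv
      convert hv using 1
      simp only [hv'def, ContinuousLinearMap.coe_restrictScalars',
        ContinuousLinearMap.neg_apply, ContinuousLinearMap.comp_apply, map_add]
      abel
    have hφds : DifferentiableAt ℝ φ s := hVud s hs0 hsT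
    have hq2 : HasDerivAt (fun r => φ r ^ 2) ((2:ℕ) * φ s ^ 1 * deriv φ s) s :=
      (hφds.hasDerivAt).pow 2
    have hq1 : HasDerivAt (fun r => (inner ℝ (V r (u r)) (V r (u r)) : ℝ))
        ((inner ℝ (V s (u s)) v' : ℝ) + (inner ℝ v' (V s (u s)) : ℝ)) s :=
      HasDerivAt.inner ℝ hv2 hv2
    have heq : (fun r => (inner ℝ (V r (u r)) (V r (u r)) : ℝ)) = fun r => φ r ^ 2 := by
      funext r; exact real_inner_self_eq_norm_sq _
    rw [heq] at hq1
    have huniq : (2:ℕ) * φ s ^ 1 * deriv φ s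
        = (inner ℝ (V s (u s)) v' : ℝ) + (inner ℝ v' (V s (u s)) : ℝ) := hq2.unique hq1
    have hcomm : (inner ℝ (V s (u s)) v' : ℝ) = (inner ℝ v' (V s (u s)) : ℝ) := real_inner_comm _ _
    have hkey : φ s * deriv φ s = (inner ℝ v' (V s (u s)) : ℝ) := by
      rw [pow_one] at huniq
      push_cast at huniq
      linarith
    have hwterm : (inner ℝ (V s (w s)) (V s (u s)) : ℝ) ≤ 0 := by
      have h5 := hw s hs0 hsT
      rw [real_inner_eq_re_inner ℂ]
      exact h5
    have hGterm : (inner ℝ (V s (G s)) (V s (u s)) : ℝ) ≤ ‖V s‖ * ‖G s‖ * φ s := by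
      calc (inner ℝ (V s (G s)) (V s (u s)) : ℝ) ≤ ‖V s (G s)‖ * ‖V s (u s)‖ :=
            real_inner_le_norm _ _
        _ ≤ (‖V s‖ * ‖G s‖) * φ s := by
            apply mul_le_mul ((V s).le_opNorm _) le_rfl (norm_nonneg _)
            positivity
    have hfterm : (inner ℝ (V s (f s)) (V s (u s)) : ℝ) ≤ ‖V s‖ * ‖f s‖ * φ s := by
      calc (inner ℝ (V s (f s)) (V s (u s)) : ℝ) ≤ ‖V s (f s)‖ * ‖V s (u s)‖ :=
            real_inner_le_norm _ _
        _ ≤ (‖V s‖ * ‖f s‖) * φ s := by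
            apply mul_le_mul ((V s).le_opNorm _) le_rfl (norm_nonneg _)
            positivity
    have hsum : (inner ℝ v' (V s (u s)) : ℝ) ≤ ‖V s‖ * (‖G s‖ + ‖f s‖) * φ s := by
      rw [hv'def, inner_add_left, inner_add_left]
      have hr : ‖V s‖ * (‖G s‖ + ‖f s‖) * φ s
          = ‖V s‖ * ‖G s‖ * φ s + ‖V s‖ * ‖f s‖ * φ s := by ring
      rw [hr]
      linarith
    rcases eq_or_lt_of_le (hφ0 s) with h0 | hpos'
    · have hder0 : deriv φ s = 0 := by
        have hmin : IsLocalMin φ s :=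
          Filter.Eventually.of_forall fun r => by rw [← h0]; exact hφ0 r
        exact hmin.deriv_eq_zero
      rw [hder0]
      have : (0:ℝ) ≤ φ s + ω := by linarith [hφ0 s]
      exact mul_nonneg (hg0 s) (Real.rpow_nonneg this p)
    · have hd1 : deriv φ s ≤ ‖V s‖ * (‖G s‖ + ‖f s‖) := by
        have h2 : deriv φ s * φ s ≤ (‖V s‖ * (‖G s‖ + ‖f s‖)) * φ s := by
          rw [mul_comm (deriv φ s)]
          calc φ s * deriv φ s = (inner ℝ v' (V s (u s)) : ℝ) := hkey
            _ ≤ _ := hsum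
        exact le_of_mul_le_mul_right h2 hpos'
      have hup : ‖u s‖ ^ p ≤ ‖U s‖ ^ p * φ s ^ p := by
        calc ‖u s‖ ^ p ≤ (‖U s‖ * φ s) ^ p :=
              Real.rpow_le_rpow (norm_nonneg _) (huU s hs0) (by linarith)
          _ = _ := Real.mul_rpow (norm_nonneg _) (hφ0 s)
      have hGf : ‖G s‖ + ‖f s‖ ≤ α s * ‖U s‖ ^ p * (φ s ^ p + ω ^ p) := by
        have h3 := hGb s hs0 hsT
        have h4 := (hfb s hs0 hsT).trans (hβω s hs0)
        have h5 : α s * ‖u s‖ ^ p ≤ α s * (‖U s‖ ^ p * φ s ^ p) :=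
          mul_le_mul_of_nonneg_left hup (hα0 s)
        nlinarith [h3, h4, h5]
      have hφω : φ s ^ p + ω ^ p ≤ (φ s + ω) ^ p := my_add_rpow (hφ0 s) hω hp.le
      calc deriv φ s ≤ ‖V s‖ * (‖G s‖ + ‖f s‖) := hd1
        _ ≤ ‖V s‖ * (α s * ‖U s‖ ^ p * (φ s ^ p + ω ^ p)) :=
            mul_le_mul_of_nonneg_left hGf (norm_nonneg _)
        _ = (α s * ‖V s‖ * ‖U s‖ ^ p) * (φ s ^ p + ω ^ p) := by ring
        _ ≤ (α s * ‖V s‖ * ‖U s‖ ^ p) * (φ s + ω) ^ p := by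
            apply mul_le_mul_of_nonneg_left hφω
            have := hα0 s
            positivity
        _ = g s * (φ s + ω) ^ p := by rw [hgs]
  have hJle : ∀ t : ℝ, 0 ≤ t → ∫ s in (0:ℝ)..t, g s ≤ J := by
    intro t ht0
    rw [intervalIntegral.integral_of_le ht0, hJ]
    have heq2 : ∫ s in Set.Ioc (0:ℝ) t, g s
        = ∫ s in Set.Ioc (0:ℝ) t, α s * ‖V s‖ * ‖U s‖ ^ p := by
      apply setIntegral_congr_fun measurableSet_Ioc
      intro ξ hξ
      simp only [hgdef, max_eq_left hξ.1.le]
    rw [heq2]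
    apply setIntegral_mono_set hJint
    · exact Filter.Eventually.of_forall fun ξ =>
        mul_nonneg (mul_nonneg (hα0 ξ) (norm_nonneg _)) (Real.rpow_nonneg (norm_nonneg _) _)
    · exact HasSubset.Subset.eventuallyLE Set.Ioc_subset_Ioi_self
  have main : ∀ t, 0 ≤ t → ENNReal.ofReal t < T → ‖u t‖ ≤ ‖U t‖ * (K - ω) := by
    intro t ht0 htT
    have hφb := gronwall_bound hp hω ht0 φ g hφ0
      (fun s hs => hVud s hs.1 (lt_of_le_of_lt (ENNReal.ofReal_le_ofReal hs.2) htT))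
      hgc hg0
      (fun s hs => hineq s hs.1 (lt_of_le_of_lt (ENNReal.ofReal_le_ofReal hs.2) htT))
      (by rw [hφ00]; exact hpos) (hJle t ht0) (by rw [hφ00]; exact hsmall)
    rw [hφ00] at hφb
    calc ‖u t‖ ≤ ‖U t‖ * φ t := huU t ht0
      _ ≤ ‖U t‖ * (K - ω) := by
          apply mul_le_mul_of_nonneg_left _ (norm_nonneg _)
          rw [hKdef]; linarith
  refine ⟨main, ?_⟩
  intro hTtop hUlim
  have hKω : ω ≤ K := by
    have hD0 : 0 < (‖u₀‖ + ω) ^ (1 - p) - (p - 1) * J := by linarith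
    have h1 : (‖u₀‖ + ω) ^ (1 - p) - (p - 1) * J ≤ (‖u₀‖ + ω) ^ (1 - p) := by
      have : 0 ≤ (p - 1) * J := mul_nonneg (by linarith) hJ0
      linarith
    have h2 : (‖u₀‖ + ω) ^ (1 - p) = ((‖u₀‖ + ω) ^ (p - 1))⁻¹ := by
      rw [← Real.rpow_neg hpos.le]
      norm_num
    have h3 : (‖u₀‖ + ω) ^ (p - 1) ≤ 1 / ((‖u₀‖ + ω) ^ (1 - p) - (p - 1) * J) := by
      have h6 := one_div_le_one_div_of_le hD0 h1
      have h8 : 1 / ((‖u₀‖ + ω) ^ (1 - p)) = (‖u₀‖ + ω) ^ (p - 1) := by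
        rw [h2, one_div, inv_inv]
      rw [h8] at h6
      exact h6
    have h4 : ((‖u₀‖ + ω) ^ (p - 1)) ^ (1 / (p - 1)) ≤ K := by
      rw [hKdef]
      refine Real.rpow_le_rpow (by positivity) h3 ?_
      have h7 : 0 < p - 1 := by linarith
      positivity
    have h5 : ((‖u₀‖ + ω) ^ (p - 1)) ^ (1 / (p - 1)) = ‖u₀‖ + ω := by
      rw [one_div, Real.rpow_rpow_inv hpos.le (by linarith)]
    rw [h5] at h4
    have : 0 ≤ ‖u₀‖ := norm_nonneg _
    linarith
  have hnorm : Tendsto (fun t => ‖u t‖) atTop (nhds 0) := by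
    apply squeeze_zero' (Filter.Eventually.of_forall fun t => norm_nonneg _)
    · filter_upwards [eventually_ge_atTop (0:ℝ)] with t ht0
      exact main t ht0 (by rw [hTtop]; exact ENNReal.ofReal_lt_top)
    · have := hUlim.mul_const (K - ω)
      simpa using this
  exact tendsto_zero_iff_norm_tendsto_zero.mpr hnorm
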